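/- For every γ ∈ (0,1), there exists a class S = {σ₁, σ₂} over a single context x with |Y| = 2⌈1/γ⌉, where σ₁(x) has size s = ⌈1/γ⌉, σ₂(x) has size s+1, and σ₁(x) ∩ σ₂(x) = {y*}, such that with ground truth σ* = σ₂ and demonstrator π* = δ_{y*}: the uniform policy π_{unif,σ₁} (uniform over σ₁(x)) is the unique maximizer of the likelihood over {π_{unif,σ₁}, π_{unif,σ₂}} for any sample of size m (since (1/s)^m > (1/(s+1))^m), and its loss satisfies L_{D,σ*}(π_{unif,σ₁}) = 1 − 1/s ≥ 1 − γ. -/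
import Mathlib


/-- Failure of MLE over the uniform policies: the uniform policy on the smaller support
is the unique likelihood maximizer, yet its loss against the ground truth is ≥ 1 − γ. -/
theorem stmt8 (γ : ℝ) (hγ0 : 0 < γ) (hγ1 : γ < 1) :
    ∃ (A B : Finset (Fin (2 * ⌈1 / γ⌉₊))) (ystar : Fin (2 * ⌈1 / γ⌉₊)),
      A.card = ⌈1 / γ⌉₊ ∧ B.card = ⌈1 / γ⌉₊ + 1 ∧ A ∩ B = {ystar} ∧
      (∀ m : ℕ, 1 ≤ m → (1 / (B.card : ℝ)) ^ m < (1 / (A.card : ℝ)) ^ m) ∧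
      1 - γ ≤ ((A.filter (fun y => y ∉ B)).card : ℝ) / (A.card : ℝ) := by
  set s : ℕ := ⌈1 / γ⌉₊ with hs
  have hs1 : 1 ≤ s := Nat.one_le_ceil_iff.mpr (by positivity)
  have hsγ : 1 / γ ≤ (s : ℝ) := Nat.le_ceil _
  have hA : ∀ m ∈ Finset.range s, m < 2 * s := fun m hm => by
    simp only [Finset.mem_range] at hm; omega
  have hB : ∀ m ∈ Finset.Ico (s - 1) (2 * s), m < 2 * s := fun m hm => by
    simp only [Finset.mem_Ico] at hm; omega
  refine ⟨Finset.attachFin (Finset.range s) hA,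
    Finset.attachFin (Finset.Ico (s - 1) (2 * s)) hB,
    ⟨s - 1, by omega⟩, ?_, ?_, ?_, ?_, ?_⟩
  · simp
  · simp; omega
  · ext y
    simp only [Finset.mem_inter, Finset.mem_attachFin, Finset.mem_range, Finset.mem_Ico,
      Finset.mem_singleton]
    constructor
    · rintro ⟨h1, h2, h3⟩
      apply Fin.ext
      simp only [Fin.val_mk]
      omega
    · rintro rfl
      simp only [Fin.val_mk]
      omega
  · intro m hm
    have hcA : (Finset.attachFin (Finset.range s) hA).card = s := by simp
    have hcB : (Finset.attachFin (Finset.Ico (s - 1) (2 * s)) hB).card = s + 1 := by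
      simp; omega
    rw [hcA, hcB]
    apply pow_lt_pow_left₀ _ (by positivity) (by omega)
    apply div_lt_div_of_pos_left one_pos (by positivity)
    push_cast; linarith
  · set A := Finset.attachFin (Finset.range s) hA with hAdef
    set B := Finset.attachFin (Finset.Ico (s - 1) (2 * s)) hB with hBdef
    have hcA : A.card = s := by simp [hAdef]
    have hfilter : A.filter (fun y => y ∉ B) = A \ B := (Finset.sdiff_eq_filter A B).symm
    have hinter : (A ∩ B).card = 1 := by
      have : A ∩ B = {(⟨s - 1, by omega⟩ : Fin (2 * s))} := by
        ext y
        simp only [hAdef, hBdef, Finset.mem_inter, Finset.mem_attachFin, Finset.mem_range,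
          Finset.mem_Ico, Finset.mem_singleton]
        constructor
        · rintro ⟨h1, h2, h3⟩
          apply Fin.ext
          simp only [Fin.val_mk]
          omega
        · rintro rfl
          simp only [Fin.val_mk]
          omega
      rw [this, Finset.card_singleton]
    have hsdiff : (A \ B).card = s - 1 := by
      have := Finset.card_inter_add_card_sdiff A B
      omega
    rw [hfilter, hsdiff, hcA]
    have hspos : (0:ℝ) < s := by exact_mod_cast hs1
    have hcast : ((s - 1 : ℕ) : ℝ) = (s : ℝ) - 1 := by
      push_cast [hs1]; ring
    rw [hcast]
    have h1s : 1 / (s : ℝ) ≤ γ := by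
      rw [div_le_iff₀ hspos]
      rw [div_le_iff₀ hγ0] at hsγ
      linarith
    rw [sub_div, div_self (ne_of_gt hspos)]
    linarith
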